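/- For any integers d ≥ 1 and N ≥ 1, the greatest common divisor of the integers χ_{d,n} = 1 - (-1)^n * C(d-1, n) for 1 ≤ n ≤ N equals I_{d,N}, defined as the gcd of the integers d/δ over all δ ∈ {1,…,N} dividing d. -/

import Mathlib

open Finset

/-- `I_{d,N} = gcd { d/δ : δ ∈ {1,…,N}, δ ∣ d }`. -/
def Idn (d N : ℕ) : ℕ :=
  Finset.gcd ((Finset.Icc 1 N).filter (fun δ => δ ∣ d)) (fun δ => d / δ)

/-- `χ_{d,n} = 1 - (-1)^n * C(d-1, n)`. -/
def chiHyp (d n : ℕ) : ℤ := 1 - (-1) ^ n * ((d - 1).choose n : ℤ)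

lemma choose_id (d n : ℕ) (hd : 1 ≤ d) :
    ((d-1).choose n : ℤ) * ((d:ℤ) - 1 - n) = ((d-1).choose (n+1) : ℤ) * (n+1) := by
  rcases le_or_gt n (d-1) with h | h
  · have h1 := Nat.choose_succ_right_eq (d-1) n
    have h2 : ((d - 1 - n : ℕ) : ℤ) = (d:ℤ) - 1 - n := by omega
    rw [← h2]
    exact_mod_cast h1.symm
  · rw [Nat.choose_eq_zero_of_lt h, Nat.choose_eq_zero_of_lt (by omega)]
    simp

lemma prod_sub_eq (d : ℕ) (hd : 1 ≤ d) (n : ℕ) :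
    ∏ k ∈ Icc 1 n, ((k : ℤ) - d) = (-1)^n * ((d-1).choose n : ℤ) * (n.factorial : ℤ) := by
  induction n with
  | zero => simp
  | succ n ih =>
    rw [Finset.prod_Icc_succ_top (by omega), ih, Nat.factorial_succ]
    have key := choose_id d n hd
    push_cast
    linear_combination ((-1:ℤ))^(n+1) * (n.factorial : ℤ) * key

lemma fact_mul_chi (d : ℕ) (hd : 1 ≤ d) (n : ℕ) :
    (n.factorial : ℤ) * chiHyp d n = (n.factorial : ℤ) - ∏ k ∈ Icc 1 n, ((k:ℤ) - d) := by
  rw [prod_sub_eq d hd n]; unfold chiHyp; ring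

-- sum of factorizations = factorization of factorial
lemma fac_sum (p : ℕ) (n : ℕ) :
    (n.factorial).factorization p = ∑ k ∈ Icc 1 n, (k).factorization p := by
  induction n with
  | zero => simp
  | succ n ih =>
    rw [Finset.sum_Icc_succ_top (by omega), ← ih, Nat.factorial_succ,
      Nat.factorization_mul (by omega) (Nat.factorial_ne_zero n)]
    simp [add_comm]

lemma prod_dvd (p : ℕ) (d e n : ℕ) (hpd : (p:ℤ)^e ∣ (d:ℤ))
    (hm : ∀ k ∈ Icc 1 n, k.factorization p ≤ e) :
    (p:ℤ)^(∑ k ∈ Icc 1 n, k.factorization p) ∣ ∏ k ∈ Icc 1 n, ((k:ℤ) - d) := by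
  rw [← Finset.prod_pow_eq_pow_sum]
  apply Finset.prod_dvd_prod_of_dvd
  intro k hk
  have h1 : (p:ℤ)^(k.factorization p) ∣ (k:ℤ) := by
    exact_mod_cast Int.natCast_dvd_natCast.mpr (Nat.ordProj_dvd k p)
  have h2 : (p:ℤ)^(k.factorization p) ∣ (d:ℤ) :=
    dvd_trans (pow_dvd_pow _ (hm k hk)) hpd
  exact dvd_sub h1 h2

lemma diff_dvd (p : ℕ) (d e m : ℕ) (hpd : (p:ℤ)^e ∣ (d:ℤ)) (hme : m ≤ e) :
    ∀ n : ℕ, (∀ k ∈ Icc 1 n, k.factorization p ≤ m) →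
    (p:ℤ)^((n.factorial).factorization p + (e - m)) ∣
      ((n.factorial : ℤ) - ∏ k ∈ Icc 1 n, ((k:ℤ) - d)) := by
  intro n
  induction n with
  | zero => simp
  | succ n ih =>
    intro hm
    have hm' : ∀ k ∈ Icc 1 n, k.factorization p ≤ m := by
      intro k hk; apply hm; simp only [mem_Icc] at hk ⊢; omega
    have hn1 : (n+1).factorization p ≤ m := hm (n+1) (by simp)
    have e1 : ((n+1).factorial).factorization p
        = (n+1).factorization p + (n.factorial).factorization p := by
      rw [Nat.factorial_succ, Nat.factorization_mul (by omega) (Nat.factorial_ne_zero n)]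
      simp
    have key : ((n+1).factorial : ℤ) - ∏ k ∈ Icc 1 (n+1), ((k:ℤ) - d)
        = ((n:ℤ)+1) * ((n.factorial : ℤ) - ∏ k ∈ Icc 1 n, ((k:ℤ) - d))
          + (d:ℤ) * ∏ k ∈ Icc 1 n, ((k:ℤ) - d) := by
      rw [Finset.prod_Icc_succ_top (by omega), Nat.factorial_succ]
      push_cast
      ring
    rw [key, e1]
    apply dvd_add
    · have h1 : (p:ℤ)^((n+1).factorization p) ∣ ((n:ℤ)+1) := by
        have := Int.natCast_dvd_natCast.mpr (Nat.ordProj_dvd (n+1) p)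
        push_cast at this ⊢
        exact this
      have := mul_dvd_mul h1 (ih hm')
      rwa [← pow_add, ← add_assoc] at this
    · have h2 : (p:ℤ)^(e + ∑ k ∈ Icc 1 n, k.factorization p) ∣
          (d:ℤ) * ∏ k ∈ Icc 1 n, ((k:ℤ) - d) := by
        rw [pow_add]
        exact mul_dvd_mul hpd (prod_dvd p d e n hpd (fun k hk => le_trans (hm' k hk) hme))
      apply dvd_trans (pow_dvd_pow _ ?_) h2
      rw [← fac_sum]
      omega

lemma pow_dvd_chi (p : ℕ) (hp : p.Prime) (d e m n : ℕ) (hd : 1 ≤ d)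
    (hpd : (p:ℤ)^e ∣ (d:ℤ)) (hme : m ≤ e)
    (hm : ∀ k ∈ Icc 1 n, k.factorization p ≤ m) :
    (p:ℤ)^(e - m) ∣ chiHyp d n := by
  have h1 := diff_dvd p d e m hpd hme n hm
  rw [← fact_mul_chi d hd n] at h1
  set c := (n.factorial).factorization p with hc
  set u := ordCompl[p] n.factorial with hu
  have hfac : (n.factorial : ℤ) = (p:ℤ)^c * (u:ℤ) := by
    exact_mod_cast (congrArg (Nat.cast : ℕ → ℤ)
      (Nat.ordProj_mul_ordCompl_eq_self n.factorial p).symm)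
  have hpu : ¬ p ∣ u := Nat.not_dvd_ordCompl hp (Nat.factorial_ne_zero n)
  rw [hfac, pow_add] at h1
  obtain ⟨t, ht⟩ := h1
  have hcancel : (u:ℤ) * chiHyp d n = (p:ℤ)^(e-m) * t := by
    have hpne : ((p:ℤ)^c) ≠ 0 := pow_ne_zero _ (by exact_mod_cast hp.ne_zero)
    apply mul_left_cancel₀ hpne
    calc (p:ℤ)^c * ((u:ℤ) * chiHyp d n) = (p:ℤ)^c * (u:ℤ) * chiHyp d n := by ring
    _ = (p:ℤ)^c * (p:ℤ)^(e-m) * t := ht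
    _ = (p:ℤ)^c * ((p:ℤ)^(e-m) * t) := by ring
  have hdvd : (p:ℤ)^(e-m) ∣ (u:ℤ) * chiHyp d n := ⟨t, hcancel⟩
  have hcop : IsCoprime ((p:ℤ)^(e-m)) (u:ℤ) := by
    have : Nat.Coprime (p^(e-m)) u := (hp.coprime_iff_not_dvd.mpr hpu).pow_left _
    have := Nat.isCoprime_iff_coprime.mpr this
    push_cast at this
    exact this
  exact hcop.dvd_of_dvd_mul_left hdvd

-- exact valuation helpers
lemma exact_mul (p : ℕ) (hp : p.Prime) {a b : ℕ} {x y : ℤ}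
    (hxd : (p:ℤ)^a ∣ x) (hx : ¬ (p:ℤ)^(a+1) ∣ x)
    (hyd : (p:ℤ)^b ∣ y) (hy : ¬ (p:ℤ)^(b+1) ∣ y) :
    (p:ℤ)^(a+b) ∣ x*y ∧ ¬ (p:ℤ)^(a+b+1) ∣ x*y := by
  have hpZ : Prime (p:ℤ) := Nat.prime_iff_prime_int.mp hp
  obtain ⟨x', hx'⟩ := hxd
  obtain ⟨y', hy'⟩ := hyd
  have hpx' : ¬ (p:ℤ) ∣ x' := fun ⟨w, hw⟩ => hx ⟨w, by rw [hx', hw]; ring⟩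
  have hpy' : ¬ (p:ℤ) ∣ y' := fun ⟨w, hw⟩ => hy ⟨w, by rw [hy', hw]; ring⟩
  constructor
  · exact ⟨x'*y', by rw [hx', hy']; ring⟩
  · rintro ⟨w, hw⟩
    have hpne : ((p:ℤ)^(a+b)) ≠ 0 := pow_ne_zero _ (by exact_mod_cast hp.ne_zero)
    have : x' * y' = (p:ℤ) * w := by
      apply mul_left_cancel₀ hpne
      calc (p:ℤ)^(a+b) * (x'*y') = ((p:ℤ)^a * x') * ((p:ℤ)^b * y') := by ring
      _ = x * y := by rw [← hx', ← hy']
      _ = (p:ℤ)^(a+b+1) * w := hw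
      _ = (p:ℤ)^(a+b) * ((p:ℤ)*w) := by ring
    have : (p:ℤ) ∣ x' * y' := ⟨w, this⟩
    rcases hpZ.dvd_mul.mp this with h | h
    · exact hpx' h
    · exact hpy' h

lemma exact_factor (p : ℕ) (hp : p.Prime) (d e k : ℕ) (hk : 1 ≤ k)
    (hpd : (p:ℤ)^e ∣ (d:ℤ)) (hke : k.factorization p < e) :
    (p:ℤ)^(k.factorization p) ∣ ((k:ℤ) - d) ∧ ¬ (p:ℤ)^(k.factorization p + 1) ∣ ((k:ℤ) - d) := by
  have h1 : (p:ℤ)^(k.factorization p) ∣ (k:ℤ) := by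
    exact_mod_cast Int.natCast_dvd_natCast.mpr (Nat.ordProj_dvd k p)
  have h2 : (p:ℤ)^(k.factorization p + 1) ∣ (d:ℤ) := dvd_trans (pow_dvd_pow _ (by omega)) hpd
  constructor
  · exact dvd_sub h1 (dvd_trans (pow_dvd_pow _ (by omega)) hpd)
  · intro hcon
    have h3 : (p:ℤ)^(k.factorization p + 1) ∣ (k:ℤ) := by
      have := dvd_add hcon h2
      simpa using this
    have h4 : p^(k.factorization p + 1) ∣ k := by exact_mod_cast h3
    exact Nat.pow_succ_factorization_not_dvd (by omega) hp h4

lemma exact_prod (p : ℕ) (hp : p.Prime) (d e : ℕ) (hpd : (p:ℤ)^e ∣ (d:ℤ)) :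
    ∀ M : ℕ, (∀ k ∈ Icc 1 M, k.factorization p < e) →
    (p:ℤ)^(∑ k ∈ Icc 1 M, k.factorization p) ∣ (∏ k ∈ Icc 1 M, ((k:ℤ) - d)) ∧
    ¬ (p:ℤ)^((∑ k ∈ Icc 1 M, k.factorization p) + 1) ∣ (∏ k ∈ Icc 1 M, ((k:ℤ) - d)) := by
  intro M
  induction M with
  | zero =>
    intro _
    have hemp : Icc 1 0 = (∅ : Finset ℕ) := by simp
    rw [hemp]
    simp only [Finset.sum_empty, Finset.prod_empty, pow_zero, zero_add, pow_one]
    refine ⟨dvd_refl 1, fun h => ?_⟩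
    have h1 : (p:ℤ) ≤ 1 := Int.le_of_dvd one_pos h
    have h2 := hp.two_le
    omega
  | succ M ih =>
    intro hm
    have hm' : ∀ k ∈ Icc 1 M, k.factorization p < e := by
      intro k hk; apply hm; simp only [mem_Icc] at hk ⊢; omega
    rw [Finset.prod_Icc_succ_top (by omega), Finset.sum_Icc_succ_top (by omega)]
    exact exact_mul p hp (ih hm').1 (ih hm').2
      (exact_factor p hp d e (M+1) (by omega) hpd (hm (M+1) (by simp))).1
      (exact_factor p hp d e (M+1) (by omega) hpd (hm (M+1) (by simp))).2

lemma not_pow_dvd_chi (p : ℕ) (hp : p.Prime) (d e j : ℕ) (hd : 1 ≤ d)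
    (hj : 1 ≤ j) (hje : j ≤ e)
    (hpd : (p:ℤ)^e ∣ (d:ℤ)) (hpd2 : ¬ (p:ℤ)^(e+1) ∣ (d:ℤ)) :
    ¬ (p:ℤ)^(e - j + 1) ∣ chiHyp d (p^j) := by
  intro hdvd
  set n := p^j with hn
  have hn1 : 1 ≤ n := Nat.one_le_pow _ _ hp.pos
  -- valuations of k ∈ [1, n-1] are < j ≤ e
  have hsmall : ∀ k ∈ Icc 1 (n-1), k.factorization p ≤ j - 1 := by
    intro k hk
    simp only [mem_Icc] at hk
    by_contra hcon
    have : p^j ∣ k := dvd_trans (pow_dvd_pow p (by omega)) (Nat.ordProj_dvd k p)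
    have := Nat.le_of_dvd (by omega) this
    omega
  have hsmall' : ∀ k ∈ Icc 1 (n-1), k.factorization p < e := by
    intro k hk; have := hsmall k hk; omega
  -- c = v_p((n-1)!)
  set c := ((n-1).factorial).factorization p with hc
  -- v_p(n!) = c + j
  have hvn : n.factorization p = j := by
    rw [hn, hp.factorization_pow]; simp
  have hcn : (n.factorial).factorization p = c + j := by
    have h1 : n.factorial = n * (n-1).factorial := by
      conv_lhs => rw [show n = (n-1) + 1 by omega]
      rw [Nat.factorial_succ]; congr 1; omega
    rw [h1, Nat.factorization_mul (by omega) (Nat.factorial_ne_zero _)]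
    simp [hvn, add_comm]
    exact hc.symm
  -- h1 : p^{c+e+1} ∣ n! - ∏_n
  have h1 : (p:ℤ)^(c + e + 1) ∣ (n.factorial:ℤ) - ∏ k ∈ Icc 1 n, ((k:ℤ) - d) := by
    rw [← fact_mul_chi d hd n]
    have hfd : (p:ℤ)^((n.factorial).factorization p) ∣ (n.factorial:ℤ) := by
      exact_mod_cast Int.natCast_dvd_natCast.mpr (Nat.ordProj_dvd n.factorial p)
    have := mul_dvd_mul hfd hdvd
    rw [← pow_add] at this
    apply dvd_trans (pow_dvd_pow _ ?_) this
    rw [hcn]; omega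
  -- split n! - ∏_n
  have hsplit : (n.factorial:ℤ) - ∏ k ∈ Icc 1 n, ((k:ℤ) - d)
      = (n:ℤ) * (((n-1).factorial:ℤ) - ∏ k ∈ Icc 1 (n-1), ((k:ℤ) - d))
        + (d:ℤ) * ∏ k ∈ Icc 1 (n-1), ((k:ℤ) - d) := by
    have h2 : n.factorial = n * (n-1).factorial := by
      conv_lhs => rw [show n = (n-1) + 1 by omega]
      rw [Nat.factorial_succ]; congr 1; omega
    have h3 : ∏ k ∈ Icc 1 n, ((k:ℤ) - d)
        = (∏ k ∈ Icc 1 (n-1), ((k:ℤ) - d)) * ((n:ℤ) - d) := by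
      conv_lhs => rw [show n = (n-1) + 1 by omega]
      rw [Finset.prod_Icc_succ_top (by omega)]
      congr 2
      push_cast
      omega
    rw [h2, h3]
    push_cast
    ring
  -- T1 divisible by p^{c+e+1}
  have hT1 : (p:ℤ)^(c + e + 1) ∣
      (n:ℤ) * (((n-1).factorial:ℤ) - ∏ k ∈ Icc 1 (n-1), ((k:ℤ) - d)) := by
    have hdj : (p:ℤ)^j ∣ (n:ℤ) := by
      rw [hn]; exact_mod_cast Int.natCast_dvd_natCast.mpr (dvd_refl _)
    have hdiff := diff_dvd p d e (j-1) hpd (by omega) (n-1) hsmall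
    have := mul_dvd_mul hdj hdiff
    rw [← pow_add] at this
    apply dvd_trans (pow_dvd_pow _ ?_) this
    rw [← hc]
    omega
  -- hence p^{c+e+1} ∣ d * ∏_{n-1}
  have hT2 : (p:ℤ)^(c + e + 1) ∣ (d:ℤ) * ∏ k ∈ Icc 1 (n-1), ((k:ℤ) - d) := by
    have := dvd_sub h1 hT1
    rw [hsplit] at this
    simpa using this
  -- contradiction with exactness
  have hexact := exact_prod p hp d e hpd (n-1) hsmall'
  have hsum : (∑ k ∈ Icc 1 (n-1), k.factorization p) = c := (fac_sum p (n-1)).symm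
  rw [hsum] at hexact
  have := (exact_mul p hp hpd hpd2 hexact.1 hexact.2).2
  apply this
  apply dvd_trans (pow_dvd_pow _ ?_) hT2
  omega

lemma int_pow_dvd_iff (p a : ℕ) (z : ℤ) : (p:ℤ)^a ∣ z ↔ p^a ∣ z.natAbs := by
  rw [← Int.natAbs_dvd_natAbs]
  simp [Int.natAbs_pow]


/-- For `d, N ≥ 1`, the gcd of the integers `χ_{d,n}` for `1 ≤ n ≤ N`
equals `I_{d,N}`. -/
theorem gcd_chiHyp_eq_Idn (d N : ℕ) (hd : 1 ≤ d) (hN : 1 ≤ N) :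
    Finset.gcd (Finset.Icc 1 N) (fun n => (chiHyp d n).natAbs) = Idn d N := by
  have hIdef : Idn d N
      = Finset.gcd ((Finset.Icc 1 N).filter (fun δ => δ ∣ d)) (fun δ => d / δ) := rfl
  have hchi1 : chiHyp d 1 = (d:ℤ) := by
    simp only [chiHyp, Nat.choose_one_right, pow_one]
    omega
  have h1N : (1:ℕ) ∈ Finset.Icc 1 N := by simp [hN]
  have hgd : Finset.gcd (Finset.Icc 1 N) (fun n => (chiHyp d n).natAbs) ∣ d := by
    have := Finset.gcd_dvd (f := fun n => (chiHyp d n).natAbs) h1N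
    simpa [hchi1] using this
  have hg0 : Finset.gcd (Finset.Icc 1 N) (fun n => (chiHyp d n).natAbs) ≠ 0 := by
    intro h
    rw [h] at hgd
    omega
  have h1F : (1:ℕ) ∈ (Finset.Icc 1 N).filter (fun δ => δ ∣ d) := by
    simp [hN]
  have hId : Idn d N ∣ d := by
    have := Finset.gcd_dvd (f := fun δ => d / δ) h1F
    simpa [hIdef] using this
  have hI0 : Idn d N ≠ 0 := by
    intro h
    rw [h] at hId
    omega
  apply Nat.dvd_antisymm
  · -- g ∣ I
    rw [hIdef]
    apply Finset.dvd_gcd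
    intro δ hδ
    simp only [Finset.mem_filter, Finset.mem_Icc] at hδ
    obtain ⟨⟨hδ1, hδN⟩, hδd⟩ := hδ
    have hdδ0 : d / δ ≠ 0 := by
      have := Nat.div_pos (Nat.le_of_dvd (by omega) hδd) (by omega)
      omega
    rw [← Nat.factorization_le_iff_dvd hg0 hdδ0, Finsupp.le_iff]
    intro p hpsup
    have hp : p.Prime := Nat.prime_of_mem_primeFactors (by
      rwa [← Nat.support_factorization])
    have hje : δ.factorization p ≤ d.factorization p :=
      (Finsupp.le_def.mp ((Nat.factorization_le_iff_dvd (by omega) (by omega)).mpr hδd)) p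
    have hdiv : (d / δ).factorization p = d.factorization p - δ.factorization p := by
      rw [Nat.factorization_div hδd]
      rfl
    rw [hdiv]
    rcases Nat.eq_zero_or_pos (δ.factorization p) with hj0 | hj1
    · have := (Finsupp.le_def.mp
        ((Nat.factorization_le_iff_dvd hg0 (by omega)).mpr hgd)) p
      omega
    · set j := δ.factorization p with hj
      set e := d.factorization p with he
      have hnN : p^j ≤ N := le_trans (Nat.le_of_dvd (by omega) (Nat.ordProj_dvd δ p)) hδN
      have hnI : p^j ∈ Finset.Icc 1 N := by
        simp only [Finset.mem_Icc]
        exact ⟨Nat.one_le_pow _ _ hp.pos, hnN⟩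
    
      have hgχ : Finset.gcd (Finset.Icc 1 N) (fun n => (chiHyp d n).natAbs)
          ∣ (chiHyp d (p^j)).natAbs := Finset.gcd_dvd hnI
      have hupper : ¬ (p:ℤ)^(e - j + 1) ∣ chiHyp d (p^j) := by
        apply not_pow_dvd_chi p hp d e j hd hj1 hje
        · exact_mod_cast Int.natCast_dvd_natCast.mpr (Nat.ordProj_dvd d p)
        · intro hcon
          have h2 : p^(e+1) ∣ d := by exact_mod_cast hcon
          exact Nat.pow_succ_factorization_not_dvd (by omega) hp h2
      have hχ0 : (chiHyp d (p^j)).natAbs ≠ 0 := by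
        intro h
        apply hupper
        rw [Int.natAbs_eq_zero.mp h]
        exact dvd_zero _
      have hvχ : (chiHyp d (p^j)).natAbs.factorization p ≤ e - j := by
        by_contra hcon
        exact hupper ((int_pow_dvd_iff p _ _).mpr
          ((Nat.Prime.pow_dvd_iff_le_factorization hp hχ0).mpr (by omega)))
      have := (Finsupp.le_def.mp
        ((Nat.factorization_le_iff_dvd hg0 hχ0).mpr hgχ)) p
      omega
  · -- I ∣ g
    apply Finset.dvd_gcd
    intro n hnI
    simp only [Finset.mem_Icc] at hnI
    by_cases hχ0 : (chiHyp d n).natAbs = 0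
    · simp [hχ0]
    rw [← Nat.factorization_le_iff_dvd hI0 hχ0, Finsupp.le_iff]
    intro p hpsup
    have hp : p.Prime := Nat.prime_of_mem_primeFactors (by
      rwa [← Nat.support_factorization])
    set e := d.factorization p with he
    set L := Nat.log p N with hL
    set m := min e L with hm
    have hpm_le : p^m ≤ N :=
      le_trans (Nat.pow_le_pow_right hp.pos (min_le_right _ _))
        (Nat.pow_log_le_self p (by omega))
    have hpm_dvd : p^m ∣ d :=
      dvd_trans (pow_dvd_pow p (min_le_left _ _)) (Nat.ordProj_dvd d p)
    have hmem : p^m ∈ (Finset.Icc 1 N).filter (fun δ => δ ∣ d) := by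
      simp only [Finset.mem_filter, Finset.mem_Icc]
      exact ⟨⟨Nat.one_le_pow _ _ hp.pos, hpm_le⟩, hpm_dvd⟩
    have hIa : (Idn d N).factorization p ≤ e - m := by
      have h1 : Idn d N ∣ d / p^m := by
        have := Finset.gcd_dvd (f := fun δ => d / δ) hmem
        simpa [hIdef] using this
      have hdm0 : d / p^m ≠ 0 := by
        have := Nat.div_pos (Nat.le_of_dvd (by omega) hpm_dvd) (Nat.pow_pos hp.pos)
        omega
      have h2 := (Finsupp.le_def.mp
        ((Nat.factorization_le_iff_dvd hI0 hdm0).mpr h1)) p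
      rw [Nat.factorization_div hpm_dvd] at h2
      have h3 : ((p^m).factorization) p = m := by
        rw [hp.factorization_pow]
        simp
      simp only [Finsupp.tsub_apply] at h2
      rw [h3] at h2
      exact h2
    have hchi : p^(e-m) ∣ (chiHyp d n).natAbs := by
      rcases le_or_gt e L with hel | hel
      · have hme : m = e := by omega
        simp [hme]
      · have hmL : m = L := by omega
        have hk : ∀ k ∈ Finset.Icc 1 n, k.factorization p ≤ m := by
          intro k hk
          simp only [Finset.mem_Icc] at hk
          by_contra hcon
          have h1 : p^(m+1) ∣ k := dvd_trans (pow_dvd_pow p (by omega)) (Nat.ordProj_dvd k p)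
          have h2 : p^(m+1) ≤ k := Nat.le_of_dvd (by omega) h1
          have h3 : N < p^(L+1) := Nat.lt_pow_succ_log_self hp.one_lt N
          rw [hmL] at h2
          omega
        have h4 := pow_dvd_chi p hp d e m n hd
          (by exact_mod_cast Int.natCast_dvd_natCast.mpr (Nat.ordProj_dvd d p))
          (min_le_left _ _) hk
        exact (int_pow_dvd_iff p _ _).mp h4
    have := (Nat.Prime.pow_dvd_iff_le_factorization hp hχ0).mp hchi
    omega
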